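/- Let K ≥ 1 and let P be a profile over X = {x*} ∪ {x_1,...,x_p}. For x ∈ X, let U(x) be the number of votes whose candidates in positions K−1 and K are respectively x and x*, and let T(x) = S_{K−2}(x,P) + U(x). Then for each x ∈ X there exists an extension Q of P obtained by adding two new candidates such that S_K(x,Q) ≤ S_K(x*,Q) if and only if T(x) ≤ S_K(x*,P). -/

import Mathlib

namespace PcWNC

abbrev Profile := List (List ℕ)

/-- `v` is a linear-order vote over the candidate set `X`:
a duplicate-free list whose members are exactly the elements of `X`. -/
def IsVote (X : Finset ℕ) (v : List ℕ) : Prop := v.Nodup ∧ ∀ c, c ∈ v ↔ c ∈ X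

/-- `P` is a profile over `X`: every vote is a linear order on `X`. -/
def IsProfile (X : Finset ℕ) (P : Profile) : Prop := ∀ v ∈ P, IsVote X v

/-- Restriction of a profile: delete from each vote the candidates outside `X`. -/
def restrict (X : Finset ℕ) (P : Profile) : Profile :=
  P.map (fun v => v.filter (fun c => decide (c ∈ X)))

/-- `P'` extends `P` (w.r.t. the initial candidate set `X`). -/
def Extends (X : Finset ℕ) (P' P : Profile) : Prop := restrict X P' = P

/-- Plurality score: number of votes ranking `x` first. -/
def ntop (P : Profile) (x : ℕ) : ℕ := P.countP (fun v => decide (v.head? = some x))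

/-- `K`-approval score: number of votes ranking `x` within the top `K` positions. -/
def approval (K : ℕ) (P : Profile) (x : ℕ) : ℕ :=
  P.countP (fun v => decide (x ∈ v.take K))

/-- Number of votes ranking `x` exactly in (1-indexed) position `i`. -/
def nPos (P : Profile) (i : ℕ) (x : ℕ) : ℕ :=
  P.countP (fun v => decide (x ∈ v ∧ v.idxOf x + 1 = i))

/-- Borda score of `x`: total number of candidates ranked below `x` over all votes. -/
def borda (P : Profile) (x : ℕ) : ℕ :=
  (P.map (fun v => v.countP (fun w => decide (v.idxOf x < v.idxOf w)))).sum

/-- Number of votes ranking `x` above `z`. -/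
def nAbove (P : Profile) (x z : ℕ) : ℕ :=
  P.countP (fun v => decide (x ∈ v ∧ z ∈ v ∧ v.idxOf x < v.idxOf z))

/-- Score of `x` under the positional scoring vector `s` (position `i` counted from 0). -/
def score (s : ℕ → ℤ) (P : Profile) (x : ℕ) : ℤ :=
  (P.map (fun v => s (v.idxOf x))).sum

/-- Insert the candidates of `ys` immediately below `x` in the vote `v`. -/
def insertBelow (x : ℕ) (ys : List ℕ) (v : List ℕ) : List ℕ :=
  v.takeWhile (fun c => decide (c ≠ x)) ++ x :: ys ++
    (v.dropWhile (fun c => decide (c ≠ x))).drop 1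

/-- Insert the candidates of `ys` immediately below `x` in every vote of `P`. -/
def insertProfile (x : ℕ) (ys : List ℕ) (P : Profile) : Profile :=
  P.map (insertBelow x ys)

/-- Veto score: number of votes not ranking `x` last. -/
def vetoScore (P : Profile) (x : ℕ) : ℕ :=
  P.countP (fun v => decide (v.getLast? ≠ some x))

/-- Number of votes ranking `x` in position `K-1` and `xstar` in position `K`. -/
def U (P : Profile) (K : ℕ) (x xstar : ℕ) : ℕ :=
  P.countP (fun v => decide (x ∈ v ∧ xstar ∈ v ∧ v.idxOf x + 2 = K ∧ v.idxOf xstar + 1 = K))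


section Aux
open List

theorem mem_take_iff' {x : ℕ} : ∀ (l : List ℕ), x ∈ l → ∀ n, (x ∈ l.take n ↔ l.idxOf x < n)
  | a :: l, h, 0 => by simp
  | a :: l, h, n+1 => by
    by_cases hax : x = a
    · subst hax; simp [List.idxOf_cons_self]
    · have hxl : x ∈ l := by simpa [hax] using h
      rw [List.take_succ_cons, List.idxOf_cons_ne _ (by simpa using Ne.symm hax)]
      simp only [List.mem_cons, hax, false_or]
      rw [mem_take_iff' l hxl n]
      omega

theorem length_filter' (l : List ℕ) (q : ℕ → Bool) : (l.filter q).length = l.countP q := by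
  simp [List.countP_eq_length_filter]

theorem filter_take' (w : List ℕ) (q : ℕ → Bool) (n : ℕ) :
    (w.take n).filter q = (w.filter q).take ((w.take n).countP q) := by
  have hpre : (w.take n).filter q <+: w.filter q := (List.take_prefix n w).filter q
  rw [List.prefix_iff_eq_take] at hpre
  rw [hpre, length_filter']

theorem mem_take_mono' {x : ℕ} {l : List ℕ} {m K : ℕ} (hmK : m ≤ K) (h : x ∈ l.take m) :
    x ∈ l.take K := by
  have : l.take m = (l.take K).take m := by rw [List.take_take, Nat.min_eq_left hmK]
  rw [this] at h
  exact List.take_subset _ _ h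

theorem countP_three_le_two {α : Type*} (l : List α) (p₁ p₂ p₃ q₁ q₂ : α → Bool)
    (h : ∀ a ∈ l, (if p₁ a then 1 else 0) + (if p₂ a then 1 else 0) + (if p₃ a then 1 else 0)
      ≤ (if q₁ a then (1:ℕ) else 0) + (if q₂ a then 1 else 0)) :
    l.countP p₁ + l.countP p₂ + l.countP p₃ ≤ l.countP q₁ + l.countP q₂ := by
  induction l with
  | nil => simp
  | cons a l ih =>
    simp only [List.countP_cons]
    have h1 := h a List.mem_cons_self
    have h2 := ih (fun b hb => h b (List.mem_cons_of_mem a hb))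
    omega

theorem countP_le_add {α : Type*} (l : List α) (p₁ q₁ q₂ : α → Bool)
    (h : ∀ a ∈ l, (if p₁ a then 1 else 0)
      ≤ (if q₁ a then (1:ℕ) else 0) + (if q₂ a then 1 else 0)) :
    l.countP p₁ ≤ l.countP q₁ + l.countP q₂ := by
  induction l with
  | nil => simp
  | cons a l ih =>
    simp only [List.countP_cons]
    have h1 := h a List.mem_cons_self
    have h2 := ih (fun b hb => h b (List.mem_cons_of_mem a hb))
    omega

theorem countP_mono' {α : Type*} (l : List α) (p q : α → Bool)
    (h : ∀ a ∈ l, (if p a then 1 else 0) ≤ (if q a then (1:ℕ) else 0)) :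
    l.countP p ≤ l.countP q := by
  induction l with
  | nil => simp
  | cons a l ih =>
    simp only [List.countP_cons]
    have h1 := h a List.mem_cons_self
    have h2 := ih (fun b hb => h b (List.mem_cons_of_mem a hb))
    omega

theorem isVote_length {X : Finset ℕ} {v : List ℕ} (hv : IsVote X v) : v.length = X.card := by
  rw [← List.toFinset_card_of_nodup hv.1]
  congr 1
  ext c
  simp [List.mem_toFinset, hv.2 c]

variable {X : Finset ℕ} {w : List ℕ} {K : ℕ}

/-- F1: membership in the top K of the big vote implies membership in the top K
of the restricted vote. -/
theorem mem_take_filter_of_mem_take {z : ℕ} (hz : z ∈ X) (h : z ∈ w.take K) :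
    z ∈ (w.filter (fun c => decide (c ∈ X))).take K := by
  set q : ℕ → Bool := fun c => decide (c ∈ X) with hq
  have hzq : q z = true := by simp [hq, hz]
  have h1 : z ∈ (w.take K).filter q := List.mem_filter.mpr ⟨h, hzq⟩
  rw [filter_take'] at h1
  refine mem_take_mono' ?_ h1
  calc (w.take K).countP q ≤ (w.take K).length := List.countP_le_length
    _ ≤ K := by rw [List.length_take]; omega

/-- F2 -/
theorem mem_take_of_mem_take_filter {z : ℕ} (hz : z ∈ X)
    (hwlen : w.length = X.card + 2) (hvlen : (w.filter (fun c => decide (c ∈ X))).length = X.card)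
    (h : z ∈ (w.filter (fun c => decide (c ∈ X))).take (K - 2)) :
    z ∈ w.take K := by
  set q : ℕ → Bool := fun c => decide (c ∈ X) with hq
  by_cases hlen : w.length ≤ K
  · rw [List.take_of_length_le hlen]
    exact List.mem_filter.mp (List.take_subset _ _ h) |>.1
  · have hcount : w.countP q = X.card := by rw [← length_filter']; exact hvlen
    have hnot : (w.take K).countP (fun a => decide ¬ q a = true) ≤ 2 := by
      have h1 := List.length_eq_countP_add_countP q (l := w)
      have h2 : (w.take K).countP (fun a => decide ¬ q a = true) ≤
          w.countP (fun a => decide ¬ q a = true) :=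
        List.Sublist.countP_le (List.take_sublist K w)
      omega
    have hKcount : K - 2 ≤ (w.take K).countP q := by
      have h1 := List.length_eq_countP_add_countP q (l := w.take K)
      have h2 : (w.take K).length = K := by rw [List.length_take]; omega
      omega
    have h3 : z ∈ ((w.filter q).take ((w.take K).countP q)) := mem_take_mono' hKcount h
    rw [← filter_take'] at h3
    exact List.mem_filter.mp h3 |>.1

/-- F3 -/
theorem mem_take_of_indexOf_lt {z z' : ℕ}
    (hz : z ∈ w.filter (fun c => decide (c ∈ X)))
    (hz' : z' ∈ w.filter (fun c => decide (c ∈ X)))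
    (hidx : (w.filter (fun c => decide (c ∈ X))).idxOf z <
            (w.filter (fun c => decide (c ∈ X))).idxOf z')
    (h : z' ∈ w.take K) : z ∈ w.take K := by
  set q : ℕ → Bool := fun c => decide (c ∈ X) with hq
  set v := w.filter q with hv
  set m := (w.take K).countP q with hm
  have hfz' : z' ∈ (w.take K).filter q := List.mem_filter.mpr ⟨h, (List.mem_filter.mp hz').2⟩
  rw [filter_take'] at hfz'
  have hmz' : v.idxOf z' < m := (mem_take_iff' v hz' m).mp hfz'
  have hmz : z ∈ v.take m := (mem_take_iff' v hz m).mpr (by omega)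
  rw [← filter_take'] at hmz
  exact (List.mem_filter.mp hmz).1

/-- The vote modification used in the backward direction: if `x` occupies a "pushable"
top-K position (and pushing it out does not hurt `xstar`), insert the two new candidates
just above `x`; otherwise put them at the bottom. -/
def gvote (K x xstar y₁ y₂ : ℕ) (v : List ℕ) : List ℕ :=
  if x ∈ v.take K ∧ x ∉ v.take (K-2) ∧
      ¬(x ∈ v ∧ xstar ∈ v ∧ v.idxOf x + 2 = K ∧ v.idxOf xstar + 1 = K)
  then v.take (v.idxOf x) ++ y₁ :: y₂ :: v.drop (v.idxOf x)
  else v ++ [y₁, y₂]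

theorem gvote_perm (K x xstar y₁ y₂ : ℕ) (v : List ℕ) :
    gvote K x xstar y₁ y₂ v ~ y₁ :: y₂ :: v := by
  unfold gvote; split
  · refine (List.perm_append_comm).trans ?_
    have h2 : (v.drop (v.idxOf x) ++ v.take (v.idxOf x)) ~ v :=
      (List.perm_append_comm).trans (by rw [List.take_append_drop])
    calc (y₁ :: y₂ :: v.drop (v.idxOf x)) ++ v.take (v.idxOf x)
        = y₁ :: y₂ :: (v.drop (v.idxOf x) ++ v.take (v.idxOf x)) := by simp
      _ ~ y₁ :: y₂ :: v := (h2.cons y₂).cons y₁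
  · exact (List.perm_append_comm (l₁ := v) (l₂ := [y₁, y₂]))

theorem gvote_isVote {v : List ℕ} (hv : IsVote X v) {x xstar y₁ y₂ : ℕ}
    (hy₁ : y₁ ∉ X) (hy₂ : y₂ ∉ X) (hne : y₁ ≠ y₂) :
    IsVote (insert y₁ (insert y₂ X)) (gvote K x xstar y₁ y₂ v) := by
  have hperm := gvote_perm K x xstar y₁ y₂ v
  constructor
  · rw [hperm.nodup_iff]
    have hy₁v : y₁ ∉ v := fun h => hy₁ ((hv.2 y₁).mp h)
    have hy₂v : y₂ ∉ v := fun h => hy₂ ((hv.2 y₂).mp h)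
    simp [List.nodup_cons, hv.1, hy₁v, hy₂v, hne]
  · intro c
    rw [hperm.mem_iff]
    simp only [List.mem_cons, hv.2 c, Finset.mem_insert]

theorem gvote_filter {v : List ℕ} (hv : IsVote X v) {x xstar y₁ y₂ : ℕ}
    (hy₁ : y₁ ∉ X) (hy₂ : y₂ ∉ X) :
    (gvote K x xstar y₁ y₂ v).filter (fun c => decide (c ∈ X)) = v := by
  have hvf : v.filter (fun c => decide (c ∈ X)) = v :=
    List.filter_eq_self.mpr (fun a ha => by simpa using (hv.2 a).mp ha)
  unfold gvote; split
  · rw [List.filter_append, List.filter_cons, List.filter_cons,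
      if_neg (by simp [hy₁]), if_neg (by simp [hy₂]),
      ← List.filter_append, List.take_append_drop, hvf]
  · rw [List.filter_append, hvf, List.filter_cons, List.filter_cons,
      if_neg (by simp [hy₁]), if_neg (by simp [hy₂])]
    simp

theorem gvote_take_x {v : List ℕ} (hv : IsVote X v) {x xstar y₁ y₂ : ℕ}
    (hxX : x ∈ X) (hy₁ : y₁ ∉ X) (hy₂ : y₂ ∉ X)
    (h : x ∈ (gvote K x xstar y₁ y₂ v).take K) :
    x ∈ v.take (K-2) ∨
      (x ∈ v ∧ xstar ∈ v ∧ v.idxOf x + 2 = K ∧ v.idxOf xstar + 1 = K) := by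
  have hxv : x ∈ v := (hv.2 x).mpr hxX
  have hxy₁ : x ≠ y₁ := fun e => hy₁ (e ▸ hxX)
  have hxy₂ : x ≠ y₂ := fun e => hy₂ (e ▸ hxX)
  unfold gvote at h; split_ifs at h with hC
  · exfalso
    obtain ⟨hc1, hc2, hc3⟩ := hC
    have hiK : v.idxOf x < K := (mem_take_iff' v hxv K).mp hc1
    have hiK2 : ¬ v.idxOf x < K - 2 := fun hh => hc2 ((mem_take_iff' v hxv (K-2)).mpr hh)
    have hilen : v.idxOf x < v.length := List.idxOf_lt_length_iff.mpr hxv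
    rw [List.take_append] at h
    have hlen_take : (v.take (v.idxOf x)).length = v.idxOf x := by
      rw [List.length_take]; omega
    rcases List.mem_append.mp h with h' | h'
    · have hx' : x ∈ v.take (v.idxOf x) := List.take_subset _ _ h'
      have := (mem_take_iff' v hxv (v.idxOf x)).mp hx'
      omega
    · rw [hlen_take] at h'
      have hd : K - v.idxOf x = 0 ∨ K - v.idxOf x = 1 ∨ K - v.idxOf x = 2 := by omega
      rcases hd with hd | hd | hd <;> rw [hd] at h' <;> simp at h' <;> tauto
  · rw [List.take_append] at h
    rcases List.mem_append.mp h with h' | h'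
    · by_cases h2 : x ∈ v.take (K-2)
      · exact Or.inl h2
      · by_cases hU : x ∈ v ∧ xstar ∈ v ∧ v.idxOf x + 2 = K ∧ v.idxOf xstar + 1 = K
        · exact Or.inr hU
        · exact absurd ⟨h', h2, hU⟩ hC
    · exfalso
      have := List.take_subset _ _ h'
      simp at this
      tauto

theorem gvote_take_xstar {v : List ℕ} (hv : IsVote X v) {x xstar y₁ y₂ : ℕ}
    (hxX : x ∈ X) (hxsX : xstar ∈ X) (hxx : x ≠ xstar)
    (h : xstar ∈ v.take K) :
    xstar ∈ (gvote K x xstar y₁ y₂ v).take K := by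
  have hxv : x ∈ v := (hv.2 x).mpr hxX
  have hxsv : xstar ∈ v := (hv.2 xstar).mpr hxsX
  unfold gvote; split_ifs with hC
  · obtain ⟨hc1, hc2, hc3⟩ := hC
    have hiK : v.idxOf x < K := (mem_take_iff' v hxv K).mp hc1
    have hjK : v.idxOf xstar < K := (mem_take_iff' v hxsv K).mp h
    have hij : v.idxOf x ≠ v.idxOf xstar := fun e =>
      hxx ((List.idxOf_inj hxv).mp e)
    have hiK2 : ¬ v.idxOf x < K - 2 := fun hh => hc2 ((mem_take_iff' v hxv (K-2)).mpr hh)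
    have hcase : v.idxOf xstar < v.idxOf x := by
      by_contra hji
      push_neg at hji
      have hlt : v.idxOf x < v.idxOf xstar := by omega
      exact hc3 ⟨hxv, hxsv, by omega, by omega⟩
    have h1 : xstar ∈ v.take (v.idxOf x) := (mem_take_iff' v hxsv _).mpr hcase
    rw [List.take_append]
    refine List.mem_append.mpr (Or.inl ?_)
    rw [List.take_take, Nat.min_eq_right hiK.le]
    exact h1
  · rw [List.take_append]
    exact List.mem_append.mpr (Or.inl h)

end Aux

/-- `K`-approval, two new candidates: the score of `x` can be brought down to that of `xstar`
iff `T(x) = S_{K-2}(x,P) + U(x) ≤ S_K(xstar,P)`. -/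
theorem stmt_3 (K : ℕ) (hK : 1 ≤ K) (X : Finset ℕ) (P : Profile) (hP : IsProfile X P)
    (xstar : ℕ) (hx : xstar ∈ X) (x : ℕ) (hxX : x ∈ X) :
    (∃ y₁ y₂, y₁ ∉ X ∧ y₂ ∉ X ∧ y₁ ≠ y₂ ∧
      ∃ Q, IsProfile (insert y₁ (insert y₂ X)) Q ∧ Extends X Q P ∧
        approval K Q x ≤ approval K Q xstar) ↔
      approval (K - 2) P x + U P K x xstar ≤ approval K P xstar := by
  constructor
  · rintro ⟨y₁, y₂, hy₁, hy₂, hne, Q, hQ, hExt, happ⟩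
    have hPQ : P = Q.map (fun v => v.filter (fun c => decide (c ∈ X))) := by
      rw [← hExt]; rfl
    have key : approval (K-2) P x + U P K x xstar + approval K Q xstar
        ≤ approval K Q x + approval K P xstar := by
      rw [hPQ]
      unfold approval U
      rw [List.countP_map, List.countP_map, List.countP_map]
      apply countP_three_le_two
      intro w hwQ
      simp only [Function.comp_apply]
      have hw := hQ w hwQ
      set v := w.filter (fun c => decide (c ∈ X)) with hvdef
      have hvP : v ∈ P := by
        rw [hPQ]
        exact List.mem_map_of_mem hwQ
      have hv := hP v hvP
      have hxv : x ∈ v := (hv.2 x).mpr hxX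
      have hxsv : xstar ∈ v := (hv.2 xstar).mpr hx
      have hwlen : w.length = X.card + 2 := by
        have h1 := isVote_length hw
        rw [Finset.card_insert_of_notMem (by simp [hne, hy₁]),
          Finset.card_insert_of_notMem hy₂] at h1
        omega
      have hvlen : v.length = X.card := isVote_length hv
      simp only [decide_eq_true_eq]
      by_cases hU : x ∈ v ∧ xstar ∈ v ∧ v.idxOf x + 2 = K ∧ v.idxOf xstar + 1 = K
      · have hUi : v.idxOf x + 2 = K := hU.2.2.1
        have hUj : v.idxOf xstar + 1 = K := hU.2.2.2
        have h1 : x ∉ v.take (K-2) := fun hmem => by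
          have := (mem_take_iff' v hxv (K-2)).mp hmem
          omega
        have h2 : xstar ∈ v.take K := (mem_take_iff' v hxsv K).mpr (by omega)
        by_cases h4 : xstar ∈ w.take K
        · have h5 : x ∈ w.take K :=
            mem_take_of_indexOf_lt hxv hxsv (by simp only [← hvdef]; omega) h4
          rw [if_neg h1, if_pos hU, if_pos h4, if_pos h5, if_pos h2]
        · rw [if_neg h1, if_pos hU, if_neg h4, if_pos h2]
          omega
      · have e1 : x ∈ v.take (K-2) → x ∈ w.take K := fun hmem =>
          mem_take_of_mem_take_filter hxX hwlen hvlen hmem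
        have e2 : xstar ∈ w.take K → xstar ∈ v.take K := fun hmem =>
          mem_take_filter_of_mem_take hx hmem
        by_cases a1 : x ∈ v.take (K-2)
        · by_cases a2 : xstar ∈ w.take K
          · rw [if_pos a1, if_neg hU, if_pos a2, if_pos (e1 a1), if_pos (e2 a2)]
          · rw [if_pos a1, if_neg hU, if_neg a2, if_pos (e1 a1)]
            omega
        · by_cases a2 : xstar ∈ w.take K
          · rw [if_neg a1, if_neg hU, if_pos a2, if_pos (e2 a2)]
            omega
          · rw [if_neg a1, if_neg hU, if_neg a2]
            omega
    omega
  · intro hT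
    set y₁ := X.sup id + 1 with hy₁def
    set y₂ := X.sup id + 2 with hy₂def
    have hy₁ : y₁ ∉ X := fun h => by
      have := Finset.le_sup (f := id) h
      simp only [id_eq] at this
      omega
    have hy₂ : y₂ ∉ X := fun h => by
      have := Finset.le_sup (f := id) h
      simp only [id_eq] at this
      omega
    have hne : y₁ ≠ y₂ := by omega
    refine ⟨y₁, y₂, hy₁, hy₂, hne, P.map (gvote K x xstar y₁ y₂), ?_, ?_, ?_⟩
    · intro v' hv'
      obtain ⟨v, hvP, rfl⟩ := List.mem_map.mp hv'
      exact gvote_isVote (hP v hvP) hy₁ hy₂ hne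
    · unfold Extends restrict
      rw [List.map_map]
      conv_rhs => rw [← List.map_id P]
      refine List.map_congr_left (fun v hvP => ?_)
      exact gvote_filter (hP v hvP) hy₁ hy₂
    · by_cases hxx : x = xstar
      · subst hxx
        exact le_rfl
      · have step1 : approval K (P.map (gvote K x xstar y₁ y₂)) x
            ≤ approval (K-2) P x + U P K x xstar := by
          unfold approval U
          rw [List.countP_map]
          apply countP_le_add
          intro v hvP
          simp only [Function.comp_apply, decide_eq_true_eq]
          have hv := hP v hvP
          by_cases h : x ∈ (gvote K x xstar y₁ y₂ v).take K
          · rcases gvote_take_x (K := K) hv hxX hy₁ hy₂ h with h' | h'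
            · rw [if_pos h, if_pos h']
              omega
            · rw [if_pos h, if_pos h']
              omega
          · rw [if_neg h]
            omega
        have step2 : approval K P xstar
            ≤ approval K (P.map (gvote K x xstar y₁ y₂)) xstar := by
          unfold approval
          rw [List.countP_map]
          apply countP_mono'
          intro v hvP
          simp only [Function.comp_apply, decide_eq_true_eq]
          have hv := hP v hvP
          by_cases h : xstar ∈ v.take K
          · rw [if_pos h, if_pos (gvote_take_xstar (K := K) (y₁ := y₁) (y₂ := y₂) hv hxX hx hxx h)]
          · rw [if_neg h]
            omega
        omega
end PcWNC
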